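/- Let Σ_A(ℕ) be a topologically mixing, finitely primitive (BIP) countable Markov shift and let f : Σ_A(ℕ) → ℝ satisfy the Walters condition with Var_1 f < ∞ and P(f) < ∞. Then Σ_{i∈ℕ, [i]≠∅} exp(sup f|_{[i]}) < ∞. In particular f is bounded above and coercive, i.e. lim_{i→∞} sup f|_{[i]} = −∞. -/

import Mathlib

open Filter Topology MeasureTheory
open scoped ENNReal

/-- The countable Markov shift over alphabet ℕ determined by the 0-1 matrix `A`. -/
def MarkovShift (A : ℕ → ℕ → Bool) : Type :=
  {x : ℕ → ℕ // ∀ i, A (x i) (x (i + 1)) = true}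

namespace MarkovShift

variable {A : ℕ → ℕ → Bool}

instance : TopologicalSpace (MarkovShift A) :=
  instTopologicalSpaceSubtype

instance : MeasurableSpace (MarkovShift A) := borel _

instance : BorelSpace (MarkovShift A) := ⟨rfl⟩

/-- The shift map. -/
def shift (x : MarkovShift A) : MarkovShift A :=
  ⟨fun n => x.1 (n + 1), fun i => x.2 (i + 1)⟩

/-- The cylinder set determined by a finite word. -/
def cylinder (w : List ℕ) : Set (MarkovShift A) :=
  {x | ∀ i : Fin w.length, x.1 i = w.get i}

/-- The cylinder set determined by the first `m` coordinates of `x`. -/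
def cylOf (x : MarkovShift A) (m : ℕ) : Set (MarkovShift A) :=
  {y | ∀ i < m, y.1 i = x.1 i}

/-- A symbol is admissible when its cylinder is nonempty. -/
def Admissible (A : ℕ → ℕ → Bool) (a : ℕ) : Prop :=
  ∃ x : MarkovShift A, x.1 0 = a

/-- Topologically mixing. -/
def TopologicallyMixing (A : ℕ → ℕ → Bool) : Prop :=
  ∀ a b : ℕ, Admissible A a → Admissible A b →
    ∃ N : ℕ, ∀ n ≥ N, ∃ x : MarkovShift A, x.1 0 = a ∧ (shift^[n] x).1 0 = b

/-- Finitely primitive (BIP). -/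
def FinitelyPrimitive (A : ℕ → ℕ → Bool) : Prop :=
  ∃ (K₀ : ℕ) (F : Finset ℕ), ∀ a b : ℕ, Admissible A a → Admissible A b →
    ∃ w : List ℕ, w.length = K₀ ∧ (∀ c ∈ w, c ∈ F) ∧
      List.Chain' (fun u v => A u v = true) (a :: (w ++ [b]))

/-- First coordinate where two distinct points disagree. -/
noncomputable def firstDiff (x y : MarkovShift A) (h : x ≠ y) : ℕ :=
  Nat.find (Function.ne_iff.mp (fun hxy : x.1 = y.1 => h (Subtype.ext hxy)))

open Classical in
/-- The metric `d(x,y) = r^{t(x,y)}`. -/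
noncomputable def dist' (r : ℝ) (x y : MarkovShift A) : ℝ :=
  if h : x = y then 0 else r ^ firstDiff x y h

/-- Birkhoff sum `S_n f`. -/
def birkhoff (f : MarkovShift A → ℝ) (n : ℕ) (x : MarkovShift A) : ℝ :=
  ∑ j ∈ Finset.range n, f (shift^[j] x)

/-- The set of values `|S_n f x - S_n f y|` over pairs agreeing on the first `m` coordinates. -/
def varSet (f : MarkovShift A → ℝ) (n m : ℕ) : Set ℝ :=
  {c | ∃ x y : MarkovShift A, (∀ i < m, x.1 i = y.1 i) ∧ c = |birkhoff f n x - birkhoff f n y|}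

/-- `Var_m (S_n f)`. -/
noncomputable def varBirk (f : MarkovShift A → ℝ) (n m : ℕ) : ℝ := sSup (varSet f n m)

/-- `Var_1 f < ∞`. -/
def Var1Finite (f : MarkovShift A → ℝ) : Prop := BddAbove (varSet f 1 1)

/-- The set whose supremum is `sup_{n ≥ 1} Var_{n+k}(S_n f)`. -/
def waltersSet (f : MarkovShift A → ℝ) (k : ℕ) : Set ℝ :=
  {c | ∃ n, 1 ≤ n ∧ c ∈ varSet f n (n + k)}

/-- `M_k = sup_{n ≥ 1} Var_{n+k}(S_n f)`. -/
noncomputable def waltersSup (f : MarkovShift A → ℝ) (k : ℕ) : ℝ := sSup (waltersSet f k)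

/-- The Walters condition. -/
def SatisfiesWalters (f : MarkovShift A → ℝ) : Prop :=
  (∀ k, 1 ≤ k → BddAbove (waltersSet f k)) ∧
    Tendsto (fun k => waltersSup f k) atTop (𝓝 0)

/-- The partition function `Z_n(f,a) = Σ_{σ^n x = x, x₀ = a} e^{S_n f (x)}`. -/
noncomputable def partitionSum (f : MarkovShift A → ℝ) (n : ℕ) (a : ℕ) : ℝ :=
  ∑' x : {x : MarkovShift A // shift^[n] x = x ∧ x.1 0 = a}, Real.exp (birkhoff f n x.1)

/-- `f` has (finite) Gurevich pressure `p`. -/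
def HasGurevichPressure (f : MarkovShift A → ℝ) (p : ℝ) : Prop :=
  ∀ a : ℕ, Admissible A a →
    (∀ n, 1 ≤ n → Summable fun x : {x : MarkovShift A // shift^[n] x = x ∧ x.1 0 = a} =>
        Real.exp (birkhoff f n x.1)) ∧
    Tendsto (fun n : ℕ => (1 / (n : ℝ)) * Real.log (partitionSum f n a)) atTop (𝓝 p)

/-- σ-invariant Borel probability measure. -/
def IsInvariantProb (μ : Measure (MarkovShift A)) : Prop :=
  IsProbabilityMeasure μ ∧ μ.map shift = μ

/-- `m(f)`, the maximal ergodic average. -/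
noncomputable def mf (f : MarkovShift A → ℝ) : ℝ :=
  sSup {c | ∃ μ : Measure (MarkovShift A),
    IsInvariantProb μ ∧ Integrable f μ ∧ ∫ x, f x ∂μ = c}

/-- A maximizing measure for `f`. -/
def IsMaximizing (f : MarkovShift A → ℝ) (μ : Measure (MarkovShift A)) : Prop :=
  IsInvariantProb μ ∧ Integrable f μ ∧ ∫ x, f x ∂μ = mf f

/-- Bounded real valued function. -/
def BoundedFun (g : MarkovShift A → ℝ) : Prop := ∃ C, ∀ x, |g x| ≤ C

/-- A bounded calibrated sub-action for `f`. -/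
def IsCalibratedSubaction (f V : MarkovShift A → ℝ) : Prop :=
  Continuous V ∧ BoundedFun V ∧
    (∀ x, f x + V x - V (shift x) - mf f ≤ 0) ∧
    (∀ y, ∃ x, shift x = y ∧ f x + V x - V (shift x) - mf f = 0)

/-- The Ruelle transfer operator `(L_g u)(x) = Σ_{σ y = x} e^{g(y)} u(y)`. -/
noncomputable def ruelle (g u : MarkovShift A → ℝ) (x : MarkovShift A) : ℝ :=
  ∑' y : {y : MarkovShift A // shift y = x}, Real.exp (g y.1) * u y.1

/-- Ruelle-Perron-Frobenius data for the potential `f` with pressure `p`: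
eigenfunction `h`, eigenmeasure `ν`. -/
def IsRPF (f : MarkovShift A → ℝ) (p : ℝ) (h : MarkovShift A → ℝ)
    (ν : Measure (MarkovShift A)) : Prop :=
  Continuous h ∧ (∀ x, 0 < h x) ∧
    (∀ x, ruelle f h x = Real.exp p * h x) ∧
    IsProbabilityMeasure ν ∧
    (∀ g : MarkovShift A → ℝ, Continuous g → BoundedFun g →
      ∫ x, ruelle f g x ∂ν = Real.exp p * ∫ x, g x ∂ν) ∧
    ∫ x, h x ∂ν = 1

/-- The Gibbs measure `dμ = h dν`. -/
noncomputable def gibbs (h : MarkovShift A → ℝ) (ν : Measure (MarkovShift A)) :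
    Measure (MarkovShift A) :=
  ν.withDensity fun x => ENNReal.ofReal (h x)

/-- The Mañé potential `S_f(x,y)` (with respect to the metric of parameter `r`). -/
noncomputable def manePot (r : ℝ) (f : MarkovShift A → ℝ) (x y : MarkovShift A) : EReal :=
  ⨅ ε : {ε : ℝ // 0 < ε}, ⨆ n : {n : ℕ // 1 ≤ n},
    ⨆ _z : {z : MarkovShift A // dist' r x z < ε.1 ∧ shift^[n.1] z = y},
      ((birkhoff (fun w => f w - mf f) n.1 _z.1 : ℝ) : EReal)

/-- The (topological) support of a measure. -/
def msupport (μ : Measure (MarkovShift A)) : Set (MarkovShift A) :=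
  {x | ∀ U : Set (MarkovShift A), IsOpen U → x ∈ U → 0 < μ U}

end MarkovShift

namespace MarkovShift


section Aux
variable {A : ℕ → ℕ → Bool}

lemma shift_iter (m : ℕ) (x : MarkovShift A) (j : ℕ) :
    (shift^[m] x).1 j = x.1 (j + m) := by
  induction m generalizing x j with
  | zero => rfl
  | succ m ih => rw [Function.iterate_succ_apply, ih]; rfl

lemma get_congr (L : List ℕ) {j j' : ℕ} (h : j = j') (p : j < L.length)
    (p' : j' < L.length) : L.get ⟨j, p⟩ = L.get ⟨j', p'⟩ := by subst h; rfl

lemma exists_periodic (L : List ℕ) (hL : L ≠ [])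
    (hch : List.Chain' (fun u v => A u v = true) (L ++ [L.head hL])) :
    ∃ x : MarkovShift A,
      ∀ n, x.1 n = L.get ⟨n % L.length, Nat.mod_lt _ (List.length_pos_iff.2 hL)⟩ := by
  set N := L.length with hN
  have hN0 : 0 < N := List.length_pos_iff.2 hL
  have hedge := List.isChain_iff_getElem.mp hch
  refine ⟨⟨fun n => L.get ⟨n % N, Nat.mod_lt _ hN0⟩, ?_⟩, fun _ => rfl⟩
  intro n
  have hk : n % N < N := Nat.mod_lt _ hN0
  have hsucc : (n + 1) % N = (n % N + 1) % N := by
    conv_lhs => rw [← Nat.mod_add_mod]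
  have h1 : A ((L ++ [L.head hL]).get ⟨n % N, by simp; omega⟩)
      ((L ++ [L.head hL]).get ⟨n % N + 1, by simp; omega⟩) = true := by
    simpa only [List.get_eq_getElem] using hedge (n % N) (by simp; omega)
  have e1 : (L ++ [L.head hL]).get ⟨n % N, by simp; omega⟩ = L.get ⟨n % N, hk⟩ := by
    simp only [List.get_eq_getElem]
    exact List.getElem_append_left (by omega)
  rw [e1] at h1
  show A (L.get ⟨n % N, hk⟩) (L.get ⟨(n + 1) % N, Nat.mod_lt _ hN0⟩) = true
  rcases Nat.lt_or_ge (n % N + 1) N with h | h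
  · have e' : (n + 1) % N = n % N + 1 := by rw [hsucc]; exact Nat.mod_eq_of_lt h
    rw [get_congr L e' _ (by omega)]
    have e2 : (L ++ [L.head hL]).get ⟨n % N + 1, by simp; omega⟩
        = L.get ⟨n % N + 1, by omega⟩ := by
      simp only [List.get_eq_getElem]
      exact List.getElem_append_left (by omega)
    rwa [e2] at h1
  · have hNe : n % N + 1 = N := by omega
    have e' : (n + 1) % N = 0 := by rw [hsucc, hNe, Nat.mod_self]
    rw [get_congr L e' _ (by omega)]
    have e2 : (L ++ [L.head hL]).get ⟨n % N + 1, by simp; omega⟩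
        = L.get ⟨0, by omega⟩ := by
      simp only [List.get_eq_getElem]
      rw [List.getElem_append_right (by omega)]
      simp [hNe, List.head_eq_getElem]
    rwa [e2] at h1

end Aux

/-- Summability of `exp(sup f|_[i])` over admissible symbols; in particular `f` is
bounded above and coercive. -/
theorem summable_exp_sup_on_cylinders
    (A : ℕ → ℕ → Bool)
    (hmix : TopologicallyMixing A)
    (hbip : FinitelyPrimitive A)
    (f : MarkovShift A → ℝ)
    (hWalters : SatisfiesWalters f)
    (hVar1 : Var1Finite f)
    (p : ℝ)
    (hPfin : HasGurevichPressure f p) :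
    (Summable fun i : {i : ℕ // Admissible A i} =>
        Real.exp (sSup (f '' {x : MarkovShift A | x.1 0 = i.1}))) ∧
      (∃ M : ℝ, ∀ x : MarkovShift A, f x ≤ M) ∧
      (∀ M : ℝ, ∃ N : ℕ, ∀ i ≥ N, Admissible A i →
        sSup (f '' {x : MarkovShift A | x.1 0 = i}) ≤ M) := by
  classical
  rcases isEmpty_or_nonempty (MarkovShift A) with he | hne
  · have hemp : IsEmpty {i : ℕ // Admissible A i} :=
      ⟨fun i => (he.false i.2.choose).elim⟩
    exact ⟨summable_empty, ⟨0, fun x => (he.false x).elim⟩,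
      fun M => ⟨0, fun i _ hi => (he.false hi.choose).elim⟩⟩
  obtain ⟨x₀⟩ := hne
  -- Setup: the variation constant C
  set C := sSup (varSet f 1 1) with hCdef
  have hb1 : ∀ u : MarkovShift A, birkhoff f 1 u = f u := by
    intro u; simp [birkhoff]
  have key : ∀ u v : MarkovShift A, u.1 0 = v.1 0 → f u ≤ f v + C := by
    intro u v h
    have hmem : |birkhoff f 1 u - birkhoff f 1 v| ∈ varSet f 1 1 := by
      refine ⟨u, v, ?_, rfl⟩
      intro i hi
      interval_cases i
      exact h
    have hle := le_csSup hVar1 hmem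
    rw [hb1 u, hb1 v] at hle
    have := le_abs_self (f u - f v)
    linarith
  have hsup_le : ∀ (i : ℕ) (q : MarkovShift A), q.1 0 = i →
      sSup (f '' {x : MarkovShift A | x.1 0 = i}) ≤ f q + C := by
    intro i q hq
    refine csSup_le ⟨f q, ⟨q, hq, rfl⟩⟩ ?_
    rintro b ⟨x, hx, rfl⟩
    exact key x q (hx.trans hq.symm)
  have hle_sup : ∀ q : MarkovShift A, f q ≤ sSup (f '' {x : MarkovShift A | x.1 0 = q.1 0}) := by
    intro q
    refine le_csSup ⟨f q + C, ?_⟩ ⟨q, rfl, rfl⟩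
    rintro b ⟨x, hx, rfl⟩
    exact key x q hx
  -- BIP data
  obtain ⟨K₀, F, hF⟩ := hbip
  choose w hwlen hwF hwch using hF
  set a := x₀.1 0 with hadef
  have ha : Admissible A a := ⟨x₀, rfl⟩
  set N := 2 * K₀ + 2 with hNdef
  set F' : Finset ℕ := insert a F with hF'def
  have hF'ne : F'.Nonempty := ⟨a, Finset.mem_insert_self _ _⟩
  set m := F'.inf' hF'ne (fun c => sSup (f '' {x : MarkovShift A | x.1 0 = c}) - C) with hmdef
  have hm : ∀ q : MarkovShift A, q.1 0 ∈ F' → m ≤ f q := by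
    intro q hq
    have h1 : m ≤ sSup (f '' {x : MarkovShift A | x.1 0 = q.1 0}) - C :=
      Finset.inf'_le _ hq
    have h2 := hsup_le (q.1 0) q rfl
    linarith
  -- the periodic word for each admissible symbol
  set L : {i : ℕ // Admissible A i} → List ℕ :=
    fun i => a :: (w a i.1 ha i.2 ++ i.1 :: w i.1 a i.2 ha) with hLdef
  have hLne : ∀ i, L i ≠ [] := fun i => List.cons_ne_nil _ _
  have hLlen : ∀ i, (L i).length = N := by
    intro i
    simp only [hLdef, List.length_cons, List.length_append, hwlen]
    omega
  have hLchain : ∀ i, List.Chain' (fun u v => A u v = true) (L i ++ [(L i).head (hLne i)]) := by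
    intro i
    have c1 := hwch a i.1 ha i.2
    have c2 := hwch i.1 a i.2 ha
    have c1' : List.Chain' (fun u v => A u v = true) ((a :: w a i.1 ha i.2) ++ [i.1]) := by
      simpa using c1
    have c2' : List.Chain' (fun u v => A u v = true) ([i.1] ++ (w i.1 a i.2 ha ++ [a])) := by
      simpa using c2
    have hc := c1'.append_overlap c2' (by simp)
    have heq : (a :: w a i.1 ha i.2) ++ [i.1] ++ (w i.1 a i.2 ha ++ [a])
        = L i ++ [(L i).head (hLne i)] := by
      simp [hLdef]
    rwa [heq] at hc
  have hex : ∀ i, ∃ x : MarkovShift A,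
      ∀ n, x.1 n = (L i).get ⟨n % (L i).length, Nat.mod_lt _ (List.length_pos_iff.2 (hLne i))⟩ :=
    fun i => exists_periodic (L i) (hLne i) (hLchain i)
  choose y hy using hex
  have hval : ∀ i j (hj : j < N), (y i).1 j = (L i).get ⟨j, by rw [hLlen i]; exact hj⟩ := by
    intro i j hj
    rw [hy i j]
    exact get_congr _ (Nat.mod_eq_of_lt (by rw [hLlen i]; exact hj)) _ _
  have hy0 : ∀ i, (y i).1 0 = a := by
    intro i
    rw [hval i 0 (by omega)]
    rfl
  have hyk : ∀ i, (y i).1 (K₀ + 1) = i.1 := by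
    intro i
    rw [hval i (K₀ + 1) (by omega)]
    simp only [List.get_eq_getElem, hLdef, List.getElem_cons_succ]
    rw [List.getElem_append_right (by simp [hwlen])]
    simp [hwlen]
  have hyF : ∀ i j, j < N → j ≠ K₀ + 1 → (y i).1 j ∈ F' := by
    intro i j hj hjne
    rw [hval i j hj]
    rcases Nat.eq_zero_or_pos j with rfl | hj0
    · exact Finset.mem_insert_self _ _
    obtain ⟨j', rfl⟩ : ∃ j', j = j' + 1 := ⟨j - 1, by omega⟩
    simp only [List.get_eq_getElem, hLdef, List.getElem_cons_succ]
    rcases Nat.lt_or_ge j' K₀ with h | h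
    · rw [List.getElem_append_left (by rw [hwlen]; exact h)]
      exact Finset.mem_insert_of_mem (hwF a i.1 ha i.2 _ (List.getElem_mem _))
    · have hj'K : K₀ + 1 ≤ j' := by omega
      rw [List.getElem_append_right (by rw [hwlen]; omega)]
      have hidx : j' - (w a i.1 ha i.2).length = (j' - K₀ - 1) + 1 := by
        rw [hwlen]; omega
      simp only [hidx, List.getElem_cons_succ]
      exact Finset.mem_insert_of_mem (hwF i.1 a i.2 ha _ (List.getElem_mem _))
  have hyper : ∀ i, shift^[N] (y i) = y i := by
    intro i
    apply Subtype.ext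
    funext j
    rw [shift_iter, hy i (j + N), hy i j]
    apply get_congr
    rw [hLlen i]
    exact Nat.add_mod_right j N
  -- Birkhoff sum lower bound
  have hbirk : ∀ i : {i : ℕ // Admissible A i},
      sSup (f '' {x : MarkovShift A | x.1 0 = i.1}) - C + ((N - 1 : ℕ) : ℝ) * m
        ≤ birkhoff f N (y i) := by
    intro i
    have hmemr : K₀ + 1 ∈ Finset.range N := by
      rw [Finset.mem_range]; omega
    rw [birkhoff, ← Finset.add_sum_erase _ _ hmemr]
    have hterm1 : sSup (f '' {x : MarkovShift A | x.1 0 = i.1})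
        - C ≤ f (shift^[K₀ + 1] (y i)) := by
      have h0 : (shift^[K₀ + 1] (y i)).1 0 = i.1 := by
        rw [shift_iter]; simpa using hyk i
      have := hsup_le i.1 _ h0
      linarith
    have hterm2 : ((N - 1 : ℕ) : ℝ) * m ≤
        ∑ j ∈ (Finset.range N).erase (K₀ + 1), f (shift^[j] (y i)) := by
      have hcard : ((Finset.range N).erase (K₀ + 1)).card = N - 1 := by
        rw [Finset.card_erase_of_mem hmemr, Finset.card_range]
      calc ((N - 1 : ℕ) : ℝ) * m = ((Finset.range N).erase (K₀ + 1)).card • m := by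
            rw [hcard, nsmul_eq_mul]
        _ ≤ _ := by
            apply Finset.card_nsmul_le_sum
            intro j hjmem
            have hj1 : j < N := Finset.mem_range.mp (Finset.mem_of_mem_erase hjmem)
            have hj2 : j ≠ K₀ + 1 := Finset.ne_of_mem_erase hjmem
            apply hm
            rw [shift_iter]
            simpa using hyF i j hj1 hj2
    linarith
  -- Summability
  have hZ := (hPfin a ha).1 N (by omega)
  set e : {i : ℕ // Admissible A i} → {x : MarkovShift A // shift^[N] x = x ∧ x.1 0 = a} :=
    fun i => ⟨y i, hyper i, hy0 i⟩ with hedef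
  have einj : Function.Injective e := by
    intro i j hij
    apply Subtype.ext
    have h1 : (y i).1 (K₀ + 1) = (y j).1 (K₀ + 1) := by
      have := congrArg (fun z : {x : MarkovShift A // shift^[N] x = x ∧ x.1 0 = a}
        => z.1.1 (K₀ + 1)) hij
      simpa [hedef] using this
    rw [hyk i, hyk j] at h1
    exact h1
  have h2 : Summable (fun i : {i : ℕ // Admissible A i}
      => Real.exp (birkhoff f N (y i))) := by
    have := hZ.comp_injective einj
    exact this
  have h3 := h2.mul_left (Real.exp (C - ((N - 1 : ℕ) : ℝ) * m))
  have hexpb : ∀ i : {i : ℕ // Admissible A i},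
      Real.exp (sSup (f '' {x : MarkovShift A | x.1 0 = i.1}))
        ≤ Real.exp (C - ((N - 1 : ℕ) : ℝ) * m) * Real.exp (birkhoff f N (y i)) := by
    intro i
    rw [← Real.exp_add]
    apply Real.exp_le_exp.mpr
    have := hbirk i
    linarith
  have hmain : Summable (fun i : {i : ℕ // Admissible A i} =>
      Real.exp (sSup (f '' {x : MarkovShift A | x.1 0 = i.1}))) :=
    Summable.of_nonneg_of_le (fun i => (Real.exp_pos _).le) hexpb h3
  refine ⟨hmain, ?_, ?_⟩
  · -- bounded above
    refine ⟨Real.log (∑' i : {i : ℕ // Admissible A i},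
      Real.exp (sSup (f '' {x : MarkovShift A | x.1 0 = i.1}))), fun x => ?_⟩
    set i₀ : {i : ℕ // Admissible A i} := ⟨x.1 0, ⟨x, rfl⟩⟩ with hi₀
    have h1 : f x ≤ sSup (f '' {x' : MarkovShift A | x'.1 0 = x.1 0}) := hle_sup x
    have h2 : Real.exp (sSup (f '' {x' : MarkovShift A | x'.1 0 = i₀.1}))
        ≤ ∑' i : {i : ℕ // Admissible A i},
            Real.exp (sSup (f '' {x : MarkovShift A | x.1 0 = i.1})) :=
      hmain.le_tsum i₀ (fun _ _ => (Real.exp_pos _).le)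
    have h3 := Real.log_le_log (Real.exp_pos _) h2
    rw [Real.log_exp] at h3
    exact h1.trans h3
  · -- coercive
    intro M
    have hind : Summable (Set.indicator {i : ℕ | Admissible A i}
        (fun i => Real.exp (sSup (f '' {x : MarkovShift A | x.1 0 = i})))) :=
      summable_subtype_iff_indicator.mp hmain
    have h0 := hind.tendsto_atTop_zero
    have hev : ∀ᶠ i in atTop, Set.indicator {i : ℕ | Admissible A i}
        (fun i => Real.exp (sSup (f '' {x : MarkovShift A | x.1 0 = i}))) i
          < Real.exp M := h0.eventually_lt_const (Real.exp_pos M)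
    obtain ⟨n₀, hn₀⟩ := eventually_atTop.mp hev
    refine ⟨n₀, fun i hi hadm => ?_⟩
    have hlt := hn₀ i hi
    have hmem' : i ∈ {i : ℕ | Admissible A i} := hadm
    rw [Set.indicator_of_mem hmem'] at hlt
    exact (Real.exp_lt_exp.mp hlt).le


end MarkovShift
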